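/- For any nonnegative integer γ, the n-th homogeneous component of the Hopf algebra H(FHeap_γ) has dimension (γ+2)^{n-1} for n ≥ 1. Equivalently, the number of horizontally connected heaps of friable pieces of width γ+1 with n pieces equals (γ+2)^{n-1}; these are in bijection with sequences of k words over the alphabet {0,1,…,γ} having a total of n-k letters (summed over k ≥ 1). -/

import Mathlib

/-- `FHmem γ w n` : the word `w` of nonnegative integers is an element of the
sub-PRO `FHeap_γ` of `B(ℕ)` generated by the sequence `1^{γ+1}`, built using
exactly `n` insertions of the generator. The units are the constant-zero words,
horizontal composition is concatenation and vertical composition is the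
componentwise addition of words of the same length. Such a word encodes a heap
of `n` friable pieces of width `γ+1`. -/
inductive FHmem (γ : ℕ) : List ℕ → ℕ → Prop
  | unit (p : ℕ) : FHmem γ (List.replicate p 0) 0
  | gen : FHmem γ (List.replicate (γ + 1) 1) 1
  | hcomp {u v : List ℕ} {m n : ℕ} : FHmem γ u m → FHmem γ v n →
      FHmem γ (u ++ v) (m + n)
  | vcomp {u v : List ℕ} {m n : ℕ} : FHmem γ u m → FHmem γ v n →
      u.length = v.length → FHmem γ (List.zipWith (· + ·) u v) (m + n)

/-- Membership in `FHeap_γ`. -/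
def InFH (γ : ℕ) (u : List ℕ) : Prop := ∃ m, FHmem γ u m

/-- A reduced element of `FHeap_γ`: an element whose maximal horizontal
decomposition contains no wire `1_1 = [0]`, i.e. a horizontally connected heap
of friable pieces. -/
def ReducedFH (γ : ℕ) (w : List ℕ) : Prop :=
  InFH γ w ∧ ¬ ∃ u v : List ℕ, InFH γ u ∧ InFH γ v ∧ w = u ++ [0] ++ v


def cnt (γ : ℕ) (P : List ℕ) (j : ℕ) : ℕ :=
  P.countP fun p => decide (p ≤ j ∧ j < p + (γ+1))

def hw (γ : ℕ) (P : List ℕ) (L : ℕ) : List ℕ :=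
  (List.range L).map (cnt γ P)

lemma length_hw (γ : ℕ) (P : List ℕ) (L : ℕ) : (hw γ P L).length = L := by
  simp [hw]

lemma getElem_hw (γ : ℕ) (P : List ℕ) (L j : ℕ) (h : j < L) :
    (hw γ P L)[j]'(by simpa [length_hw] using h) = cnt γ P j := by
  simp [hw]

lemma hw_congr {γ : ℕ} {P P' : List ℕ} {L : ℕ}
    (h : ∀ j < L, cnt γ P j = cnt γ P' j) : hw γ P L = hw γ P' L := by
  unfold hw
  exact List.map_congr_left fun j hj => h j (List.mem_range.mp hj)

lemma cnt_nil (γ j : ℕ) : cnt γ [] j = 0 := rfl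

lemma cnt_append (γ : ℕ) (A B : List ℕ) (j : ℕ) :
    cnt γ (A ++ B) j = cnt γ A j + cnt γ B j := List.countP_append

lemma cnt_cons (γ : ℕ) (p : ℕ) (P : List ℕ) (j : ℕ) :
    cnt γ (p :: P) j = cnt γ [p] j + cnt γ P j := by
  have := cnt_append γ [p] P j
  simpa using this

lemma cnt_perm (γ : ℕ) {A B : List ℕ} (h : A.Perm B) (j : ℕ) :
    cnt γ A j = cnt γ B j := h.countP_eq _

lemma hw_nil (γ L : ℕ) : hw γ [] L = List.replicate L 0 := by
  rw [List.eq_replicate_iff]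
  constructor
  · simp [hw]
  · intro b hb
    simp only [hw, List.mem_map] at hb
    obtain ⟨j, _, rfl⟩ := hb
    rfl

lemma hw_gen (γ : ℕ) : hw γ [0] (γ+1) = List.replicate (γ+1) 1 := by
  rw [List.eq_replicate_iff]
  refine ⟨by simp [hw], ?_⟩
  intro b hb
  simp only [hw, List.mem_map, List.mem_range] at hb
  obtain ⟨j, hj, rfl⟩ := hb
  simp [cnt, List.countP_cons, hj]

lemma cnt_shift_lt (γ : ℕ) (P : List ℕ) (a j : ℕ) (h : j < a) :
    cnt γ (P.map (· + a)) j = 0 := by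
  rw [cnt, List.countP_map, List.countP_eq_zero]
  intro p _
  simp only [Function.comp_apply, decide_eq_true_eq]
  rintro ⟨h1, _⟩
  omega

lemma cnt_shift (γ : ℕ) (P : List ℕ) (a j : ℕ) :
    cnt γ (P.map (· + a)) (a + j) = cnt γ P j := by
  rw [cnt, List.countP_map, cnt]
  apply List.countP_congr
  intro p _
  simp only [Function.comp_apply, decide_eq_true_eq]
  constructor <;> (rintro ⟨h1, h2⟩; omega)

lemma cnt_high (γ : ℕ) (P : List ℕ) (L j : ℕ) (hb : ∀ p ∈ P, p + (γ+1) ≤ L)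
    (h : L ≤ j) : cnt γ P j = 0 := by
  rw [cnt, List.countP_eq_zero]
  intro p hp
  have := hb p hp
  simp only [decide_eq_true_eq]
  rintro ⟨h1, h2⟩
  omega

lemma hw_append (γ : ℕ) (P₁ P₂ : List ℕ) (L₁ L₂ : ℕ)
    (hb : ∀ p ∈ P₁, p + (γ+1) ≤ L₁) :
    hw γ (P₁ ++ P₂.map (· + L₁)) (L₁ + L₂) = hw γ P₁ L₁ ++ hw γ P₂ L₂ := by
  unfold hw
  rw [List.range_add, List.map_append, List.map_map]
  congr 1
  · apply List.map_congr_left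
    intro j hj
    rw [List.mem_range] at hj
    rw [cnt_append, cnt_shift_lt γ P₂ L₁ j hj]
    simp
  · apply List.map_congr_left
    intro j hj
    rw [List.mem_range] at hj
    simp only [Function.comp_apply]
    rw [cnt_append, cnt_high γ P₁ L₁ (L₁ + j) hb (Nat.le_add_right _ _),
      cnt_shift]
    simp
lemma hw_single (γ p L : ℕ) (h : p + (γ+1) ≤ L) :
    hw γ [p] L = List.replicate p 0 ++ List.replicate (γ+1) 1
      ++ List.replicate (L - p - (γ+1)) 0 := by
  have h1 : hw γ [p] L = hw γ [] p ++ hw γ [0] (L - p) := by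
    have := hw_append γ [] [0] p (L - p) (by simp)
    simp only [List.nil_append, List.map_cons, List.map_nil, Nat.zero_add] at this
    rw [← this]
    congr 1
    omega
  have h2 : hw γ [0] (L - p) = hw γ [0] (γ+1) ++ hw γ [] (L - p - (γ+1)) := by
    have := hw_append γ [0] [] (γ+1) (L - p - (γ+1)) (by simp)
    simp only [List.map_nil, List.append_nil] at this
    rw [← this]
    congr 1
    omega
  rw [h1, h2, hw_nil, hw_nil, hw_gen, List.append_assoc]

lemma hw_cons (γ p : ℕ) (P : List ℕ) (L : ℕ) :
    hw γ (p :: P) L = List.zipWith (· + ·) (hw γ [p] L) (hw γ P L) := by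
  unfold hw
  rw [List.zipWith_map, List.zipWith_self]
  apply List.map_congr_left
  intro j _
  exact cnt_cons γ p P j

lemma fhmem_hw (γ : ℕ) (P : List ℕ) (L : ℕ) (hb : ∀ p ∈ P, p + (γ+1) ≤ L) :
    FHmem γ (hw γ P L) P.length := by
  induction P with
  | nil => rw [hw_nil]; exact FHmem.unit L
  | cons p P ih =>
    rw [hw_cons]
    have hp := hb p (List.mem_cons_self)
    have h1 : FHmem γ (hw γ [p] L) 1 := by
      rw [hw_single γ p L hp]
      have := (FHmem.unit (p := p) (γ := γ)).hcomp
        ((FHmem.gen (γ := γ)).hcomp (FHmem.unit (p := L - p - (γ+1)) (γ := γ)))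
      simpa using this
    have h2 : FHmem γ (hw γ P L) P.length :=
      ih fun q hq => hb q (List.mem_cons_of_mem _ hq)
    have := h1.vcomp h2 (by rw [length_hw, length_hw])
    simpa [Nat.add_comm] using this

lemma fhmem_rep {γ : ℕ} {w : List ℕ} {n : ℕ} (h : FHmem γ w n) :
    ∃ P : List ℕ, P.length = n ∧ (∀ p ∈ P, p + (γ+1) ≤ w.length) ∧
      w = hw γ P w.length := by
  induction h with
  | unit p => exact ⟨[], rfl, by simp, by simp [hw_nil]⟩
  | gen => exact ⟨[0], rfl, by simp, by simp [hw_gen]⟩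
  | @hcomp u v m n' hu hv ihu ihv =>
    obtain ⟨P₁, hP₁, hb₁, he₁⟩ := ihu
    obtain ⟨P₂, hP₂, hb₂, he₂⟩ := ihv
    refine ⟨P₁ ++ P₂.map (· + u.length), ?_, ?_, ?_⟩
    · simp [hP₁, hP₂]
    · intro p hp
      rw [List.mem_append] at hp
      rcases hp with hp | hp
      · have := hb₁ p hp; simp only [List.length_append]; omega
      · rw [List.mem_map] at hp
        obtain ⟨q, hq, rfl⟩ := hp
        have := hb₂ q hq; simp only [List.length_append]; omega
    · rw [List.length_append, hw_append γ P₁ P₂ u.length v.length hb₁,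
        ← he₁, ← he₂]
  | @vcomp u v m n' hu hv hl ihu ihv =>
    obtain ⟨P₁, hP₁, hb₁, he₁⟩ := ihu
    obtain ⟨P₂, hP₂, hb₂, he₂⟩ := ihv
    have hlen : (List.zipWith (· + ·) u v).length = u.length := by
      rw [List.length_zipWith, hl, Nat.min_self]
    refine ⟨P₁ ++ P₂, by simp [hP₁, hP₂], ?_, ?_⟩
    · intro p hp
      rw [List.mem_append] at hp
      rw [hlen]
      rcases hp with hp | hp
      · exact hb₁ p hp
      · rw [hl]; exact hb₂ p hp
    · rw [hlen]
      conv_lhs => rw [he₁, he₂]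
      rw [hl]
      unfold hw
      rw [List.zipWith_map, List.zipWith_self]
      apply List.map_congr_left
      intro j _
      exact (cnt_append γ P₁ P₂ j).symm
lemma reduced_of_no_zero {γ : ℕ} {w : List ℕ} (h : InFH γ w) (hz : 0 ∉ w) :
    ReducedFH γ w := by
  refine ⟨h, ?_⟩
  rintro ⟨u, v, _, _, rfl⟩
  exact hz (by simp)

lemma no_zero_of_reduced {γ : ℕ} {w : List ℕ} (h : ReducedFH γ w) : 0 ∉ w := by
  intro hz
  obtain ⟨⟨n, hmem⟩, hnd⟩ := h
  obtain ⟨P, hP, hb, he⟩ := fhmem_rep hmem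
  set L := w.length with hL
  rw [he] at hz
  simp only [hw, List.mem_map, List.mem_range] at hz
  obtain ⟨k, hk, hck⟩ := hz
  have hdich : ∀ p ∈ P, p + (γ+1) ≤ k ∨ k + 1 ≤ p := by
    intro p hp
    have := (List.countP_eq_zero.mp hck) p hp
    simp only [decide_eq_true_eq] at this
    omega
  set P₁ := P.filter (fun p => decide (p + (γ+1) ≤ k)) with hP₁
  set Q := P.filter (fun p => decide (k + 1 ≤ p)) with hQ
  set P₂ := Q.map (· - (k+1)) with hP₂
  have hb₁ : ∀ p ∈ P₁, p + (γ+1) ≤ k := by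
    intro p hp
    rw [hP₁, List.mem_filter] at hp
    simpa using hp.2
  have hQmem : ∀ p ∈ Q, k + 1 ≤ p ∧ p ∈ P := by
    intro p hp
    rw [hQ, List.mem_filter] at hp
    exact ⟨by simpa using hp.2, hp.1⟩
  have hmap : P₂.map (· + (k+1)) = Q := by
    rw [hP₂, List.map_map]
    conv_rhs => rw [← List.map_id Q]
    apply List.map_congr_left
    intro p hp
    have := (hQmem p hp).1
    simp only [Function.comp_apply, id]
    omega
  have hb₂ : ∀ p ∈ P₂, p + (γ+1) ≤ L - (k+1) := by
    intro p hp
    rw [hP₂, List.mem_map] at hp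
    obtain ⟨q, hq, rfl⟩ := hp
    obtain ⟨h1, h2⟩ := hQmem q hq
    have := hb q h2
    omega
  -- w = hw P₁ k ++ [0] ++ hw P₂ (L - (k+1))
  have e1 : hw γ P₁ (k+1) = hw γ P₁ k ++ [0] := by
    have := hw_append γ P₁ [] k 1 hb₁
    simp only [List.map_nil, List.append_nil] at this
    rw [this]
    congr 1
  have e2 : hw γ (P₁ ++ Q) L = hw γ P₁ (k+1) ++ hw γ P₂ (L - (k+1)) := by
    have := hw_append γ P₁ P₂ (k+1) (L - (k+1))
      (fun p hp => Nat.le_succ_of_le (hb₁ p hp))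
    rw [hmap] at this
    have hks : k + 1 + (L - (k+1)) = L := by omega
    rw [hks] at this
    exact this
  have e3 : hw γ (P₁ ++ Q) L = w := by
    rw [he]
    apply hw_congr
    intro j _
    apply cnt_perm
    have : P.filter (fun p => !decide (p + (γ+1) ≤ k)) = Q := by
      rw [hQ]
      apply List.filter_congr
      intro p hp
      rcases hdich p hp with h' | h'
      · have h1 : ¬ (k+1 ≤ p) := by omega
        simp [h', h1]
      · have h1 : ¬ (p + (γ+1) ≤ k) := by omega
        simp [h', h1]
    rw [← this]
    exact List.filter_append_perm _ P
  have hdecomp : w = hw γ P₁ k ++ [0] ++ hw γ P₂ (L - (k+1)) := by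
    rw [← e3, e2, e1]
  exact hnd ⟨hw γ P₁ k, hw γ P₂ (L - (k+1)),
    ⟨P₁.length, fhmem_hw γ P₁ k hb₁⟩,
    ⟨P₂.length, fhmem_hw γ P₂ (L - (k+1)) hb₂⟩, hdecomp⟩
lemma scanl_le (d : List ℕ) (a : ℕ) :
    ∀ p ∈ List.scanl (· + ·) a d, a ≤ p ∧ p ≤ a + d.sum := by
  induction d generalizing a with
  | nil => simp
  | cons x d ih =>
    intro p hp
    rw [List.scanl_cons] at hp
    rcases List.mem_cons.mp hp with hp | hp
    · subst hp
      exact ⟨le_refl _, Nat.le_add_right _ _⟩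
    · have := ih (a + x) p hp
      simp only [List.sum_cons]
      omega

lemma self_mem_scanl (d : List ℕ) (a : ℕ) : a ∈ List.scanl (· + ·) a d := by
  cases d <;> simp [List.scanl_cons, List.scanl_nil]

lemma sum_mem_scanl (d : List ℕ) (a : ℕ) : a + d.sum ∈ List.scanl (· + ·) a d := by
  induction d generalizing a with
  | nil => simp
  | cons x d ih =>
    rw [List.scanl_cons, List.mem_cons]
    right
    have := ih (a + x)
    simpa [Nat.add_assoc] using this

lemma scanl_sorted (d : List ℕ) (a : ℕ) :
    List.Pairwise (· ≤ ·) (List.scanl (· + ·) a d) := by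
  induction d generalizing a with
  | nil => simp
  | cons x d ih =>
    rw [List.scanl_cons]
    simp only [List.singleton_append, List.pairwise_cons]
    refine ⟨fun b hb => ?_, ih (a + x)⟩
    have := (scanl_le d (a + x) b hb).1
    omega

lemma scanl_head (d : List ℕ) (a : ℕ) : (List.scanl (· + ·) a d).head? = some a := by
  cases d <;> simp [List.scanl_cons, List.scanl_nil]

lemma scanl_inj : ∀ (d d' : List ℕ) (a : ℕ),
    List.scanl (· + ·) a d = List.scanl (· + ·) a d' → d = d' := by
  intro d
  induction d with
  | nil =>
    intro d' a h
    cases d' with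
    | nil => rfl
    | cons y d' =>
      have := congrArg List.length h
      simp [List.length_scanl] at this
  | cons x d ih =>
    intro d' a h
    cases d' with
    | nil =>
      have := congrArg List.length h
      simp [List.length_scanl] at this
    | cons y d' =>
      rw [List.scanl_cons, List.scanl_cons] at h
      simp only [List.singleton_append, List.cons.injEq] at h
      obtain ⟨-, h2⟩ := h
      have hx : a + x = a + y := by
        have h3 := congrArg List.head? h2
        rw [scanl_head, scanl_head] at h3
        exact Option.some.inj h3
      have hxy : x = y := by omega
      subst hxy
      rw [ih d' (a + x) h2]

lemma scanl_cover (γ : ℕ) (d : List ℕ) (a : ℕ) (hd : ∀ x ∈ d, x ≤ γ+1) :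
    ∀ j, a ≤ j → j < a + d.sum + (γ+1) →
      ∃ p ∈ List.scanl (· + ·) a d, p ≤ j ∧ j < p + (γ+1) := by
  induction d generalizing a with
  | nil =>
    intro j h1 h2
    exact ⟨a, self_mem_scanl [] a, h1, by simpa using h2⟩
  | cons x d ih =>
    intro j h1 h2
    by_cases hj : j < a + (γ+1)
    · exact ⟨a, self_mem_scanl _ a, h1, hj⟩
    · have hx : x ≤ γ+1 := hd x (List.mem_cons_self)
      have h1' : a + x ≤ j := by omega
      have h2' : j < (a + x) + d.sum + (γ+1) := by
        simp only [List.sum_cons] at h2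
        omega
      obtain ⟨p, hp, hle, hlt⟩ := ih (a + x)
        (fun y hy => hd y (List.mem_cons_of_mem _ hy)) j h1' h2'
      refine ⟨p, ?_, hle, hlt⟩
      rw [List.scanl_cons, List.mem_cons]
      exact Or.inr hp

lemma cnt_ext {γ : ℕ} {P P' : List ℕ} {L : ℕ} (h : hw γ P L = hw γ P' L)
    (j : ℕ) (hj : j < L) : cnt γ P j = cnt γ P' j := by
  rw [← getElem_hw γ P L j hj, ← getElem_hw γ P' L j hj]
  exact List.getElem_of_eq h _

lemma cnt_pos_of_mem {γ : ℕ} {P : List ℕ} {r j : ℕ} (hr : r ∈ P)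
    (h1 : r ≤ j) (h2 : j < r + (γ+1)) : 0 < cnt γ P j :=
  List.countP_pos_iff.mpr ⟨r, hr, by simp [h1, h2]⟩

lemma cnt_mem_elim {γ : ℕ} {P : List ℕ} {j : ℕ} (h : 0 < cnt γ P j) :
    ∃ r ∈ P, r ≤ j ∧ j < r + (γ+1) := by
  obtain ⟨r, hr, hpr⟩ := List.countP_pos_iff.mp h
  simp only [decide_eq_true_eq] at hpr
  exact ⟨r, hr, hpr⟩

lemma hw_inj (γ : ℕ) : ∀ (P P' : List ℕ) (L : ℕ),
    List.Pairwise (· ≤ ·) P → List.Pairwise (· ≤ ·) P' →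
    (∀ p ∈ P, p + (γ+1) ≤ L) → (∀ p ∈ P', p + (γ+1) ≤ L) →
    hw γ P L = hw γ P' L → P = P' := by
  intro P
  induction P with
  | nil =>
    intro P' L _ hs' _ hb' h
    cases P' with
    | nil => rfl
    | cons q T =>
      exfalso
      have hq : q < L := by have := hb' q (List.mem_cons_self); omega
      have h1 := cnt_ext h q hq
      have h2 : 0 < cnt γ (q :: T) q :=
        cnt_pos_of_mem (List.mem_cons_self) (le_refl q) (by omega)
      rw [cnt_nil] at h1
      omega
  | cons p T ih =>
    intro P' L hs hs' hb hb' h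
    cases P' with
    | nil =>
      exfalso
      have hp : p < L := by have := hb p (List.mem_cons_self); omega
      have h1 := cnt_ext h p hp
      have h2 : 0 < cnt γ (p :: T) p :=
        cnt_pos_of_mem (List.mem_cons_self) (le_refl p) (by omega)
      rw [cnt_nil] at h1
      omega
    | cons q T' =>
      have hpL : p < L := by have := hb p (List.mem_cons_self); omega
      have hqL : q < L := by have := hb' q (List.mem_cons_self); omega
      have hqp : q ≤ p := by
        have h1 := cnt_ext h p hpL
        have h2 : 0 < cnt γ (p :: T) p :=
          cnt_pos_of_mem (List.mem_cons_self) (le_refl p) (by omega)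
        rw [h1] at h2
        obtain ⟨r, hr, hr1, _⟩ := cnt_mem_elim h2
        rcases List.mem_cons.mp hr with rfl | hr
        · exact hr1
        · have := (List.pairwise_cons.mp hs').1 r hr
          omega
      have hpq : p ≤ q := by
        have h1 := cnt_ext h q hqL
        have h2 : 0 < cnt γ (q :: T') q :=
          cnt_pos_of_mem (List.mem_cons_self) (le_refl q) (by omega)
        rw [← h1] at h2
        obtain ⟨r, hr, hr1, _⟩ := cnt_mem_elim h2
        rcases List.mem_cons.mp hr with rfl | hr
        · exact hr1
        · have := (List.pairwise_cons.mp hs).1 r hr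
          omega
      have hpq' : p = q := le_antisymm hpq hqp
      subst hpq'
      have htail : hw γ T L = hw γ T' L := by
        apply hw_congr
        intro j hj
        have h1 := cnt_ext h j hj
        rw [cnt_cons γ p T j, cnt_cons γ p T' j] at h1
        omega
      rw [ih T' L (List.pairwise_cons.mp hs).2 (List.pairwise_cons.mp hs').2
        (fun r hr => hb r (List.mem_cons_of_mem _ hr))
        (fun r hr => hb' r (List.mem_cons_of_mem _ hr)) htail]
lemma scanl_diff : ∀ (Q : List ℕ) (p : ℕ), List.Pairwise (· ≤ ·) (p :: Q) →
    List.scanl (· + ·) p (List.zipWith (fun a b => b - a) (p :: Q) Q) = p :: Q := by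
  intro Q
  induction Q with
  | nil => intro p _; simp
  | cons q Q' ih =>
    intro p hs
    have hpq : p ≤ q := (List.pairwise_cons.mp hs).1 q (List.mem_cons_self)
    have hs' : List.Pairwise (· ≤ ·) (q :: Q') := (List.pairwise_cons.mp hs).2
    show List.scanl (· + ·) p ((q - p) :: List.zipWith (fun a b => b - a) (q :: Q') Q')
        = p :: q :: Q'
    rw [List.scanl_cons]
    have : p + (q - p) = q := by omega
    rw [this, ih q hs']

lemma diffs_le (γ : ℕ) : ∀ (Q : List ℕ) (p L : ℕ), List.Pairwise (· ≤ ·) (p :: Q) →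
    (∀ r ∈ p :: Q, r + (γ+1) ≤ L) →
    (∀ j, p ≤ j → j < L → ∃ r ∈ p :: Q, r ≤ j ∧ j < r + (γ+1)) →
    ∀ x ∈ List.zipWith (fun a b => b - a) (p :: Q) Q, x ≤ γ+1 := by
  intro Q
  induction Q with
  | nil => intro p L _ _ _ x hx; simp at hx
  | cons q Q' ih =>
    intro p L hs hb hc x hx
    have hpq : p ≤ q := (List.pairwise_cons.mp hs).1 q (List.mem_cons_self)
    have hs' : List.Pairwise (· ≤ ·) (q :: Q') := (List.pairwise_cons.mp hs).2
    have hx' : x = q - p ∨ x ∈ List.zipWith (fun a b => b - a) (q :: Q') Q' := by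
      simpa using List.mem_cons.mp hx
    rcases hx' with rfl | hx'
    · -- first difference
      by_contra hgt
      push_neg at hgt
      have hq : p + (γ+1) < q := by omega
      have hjL : p + (γ+1) < L := by
        have := hb q (List.mem_cons_of_mem _ (List.mem_cons_self))
        omega
      obtain ⟨r, hr, hr1, hr2⟩ := hc (p + (γ+1)) (by omega) hjL
      rcases List.mem_cons.mp hr with rfl | hr
      · omega
      · have : q ≤ r := by
          rcases List.mem_cons.mp hr with rfl | hr
          · exact le_refl _
          · exact (List.pairwise_cons.mp hs').1 r hr
        omega
    · -- tail
      refine ih q L hs' (fun r hr => hb r (List.mem_cons_of_mem _ hr)) ?_ x hx'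
      intro j hj hjL
      obtain ⟨r, hr, hr1, hr2⟩ := hc j (le_trans hpq hj) hjL
      rcases List.mem_cons.mp hr with rfl | hr
      · exact ⟨q, List.mem_cons_self, hj, by omega⟩
      · exact ⟨r, hr, hr1, hr2⟩
lemma phi_bounds (γ : ℕ) (d : List ℕ) :
    ∀ p ∈ List.scanl (· + ·) 0 d, p + (γ+1) ≤ d.sum + (γ+1) := by
  intro p hp
  have := (scanl_le d 0 p hp).2
  omega

lemma phi_no_zero (γ : ℕ) (d : List ℕ) (hd : ∀ x ∈ d, x ≤ γ+1) :
    0 ∉ hw γ (List.scanl (· + ·) 0 d) (d.sum + (γ+1)) := by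
  intro h0
  simp only [hw, List.mem_map, List.mem_range] at h0
  obtain ⟨j, hj, hc⟩ := h0
  obtain ⟨r, hr, hr1, hr2⟩ := scanl_cover γ d 0 hd j (Nat.zero_le _) (by omega)
  have := cnt_pos_of_mem (γ := γ) hr hr1 hr2
  omega

lemma phi_spec (γ n : ℕ) (hn : 1 ≤ n) (d : List ℕ) (hl : d.length = n-1)
    (hd : ∀ x ∈ d, x ≤ γ+1) :
    FHmem γ (hw γ (List.scanl (· + ·) 0 d) (d.sum + (γ+1))) n ∧
    ReducedFH γ (hw γ (List.scanl (· + ·) 0 d) (d.sum + (γ+1))) := by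
  have hmem : FHmem γ (hw γ (List.scanl (· + ·) 0 d) (d.sum + (γ+1))) n := by
    have := fhmem_hw γ (List.scanl (· + ·) 0 d) (d.sum + (γ+1)) (phi_bounds γ d)
    rwa [List.length_scanl, hl, Nat.sub_add_cancel hn] at this
  exact ⟨hmem, reduced_of_no_zero ⟨n, hmem⟩ (phi_no_zero γ d hd)⟩

lemma part1_card (γ n : ℕ) (hn : 1 ≤ n) :
    Nat.card {w : List ℕ // FHmem γ w n ∧ ReducedFH γ w}
      = Nat.card {d : List ℕ // d.length = n-1 ∧ ∀ x ∈ d, x ≤ γ+1} := by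
  symm
  apply Nat.card_eq_of_bijective
    (fun d => (⟨hw γ (List.scanl (· + ·) 0 d.1) (d.1.sum + (γ+1)),
      phi_spec γ n hn d.1 d.2.1 d.2.2⟩ :
      {w : List ℕ // FHmem γ w n ∧ ReducedFH γ w}))
  constructor
  · -- injective
    rintro ⟨d, hl, hd⟩ ⟨d', hl', hd'⟩ h
    simp only [Subtype.mk.injEq] at h
    have hL : d.sum + (γ+1) = d'.sum + (γ+1) := by
      have := congrArg List.length h
      rwa [length_hw, length_hw] at this
    have hP : List.scanl (· + ·) 0 d = List.scanl (· + ·) 0 d' := by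
      apply hw_inj γ _ _ (d.sum + (γ+1)) (scanl_sorted d 0) (scanl_sorted d' 0)
        (phi_bounds γ d) (by rw [hL]; exact phi_bounds γ d')
      rw [h, hL]
    exact Subtype.ext (scanl_inj d d' 0 hP)
  · -- surjective
    rintro ⟨w, hmem, hred⟩
    have hz : 0 ∉ w := no_zero_of_reduced hred
    obtain ⟨P0, hP0, hb0, he⟩ := fhmem_rep hmem
    set L := w.length with hLdef
    obtain ⟨P, hperm, hsort⟩ : ∃ P : List ℕ, P.Perm P0 ∧ List.Pairwise (· ≤ ·) P :=
      ⟨Multiset.sort (↑P0 : Multiset ℕ) (· ≤ ·),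
        Multiset.coe_eq_coe.mp (Multiset.sort_eq _ _), Multiset.pairwise_sort _ _⟩
    have hwP : w = hw γ P L := by
      rw [he]
      exact hw_congr fun j _ => cnt_perm γ hperm.symm j
    have hb : ∀ p ∈ P, p + (γ+1) ≤ L := fun p hp => hb0 p (hperm.mem_iff.mp hp)
    have hcov : ∀ j, j < L → ∃ r ∈ P, r ≤ j ∧ j < r + (γ+1) := by
      intro j hj
      have hpos : 0 < cnt γ P j := by
        rcases Nat.eq_zero_or_pos (cnt γ P j) with h0 | h
        · exfalso
          apply hz
          rw [hwP]
          simp only [hw, List.mem_map, List.mem_range]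
          exact ⟨j, hj, h0⟩
        · exact h
      exact cnt_mem_elim hpos
    have hPlen : P.length = n := by rw [hperm.length_eq, hP0]
    obtain ⟨p, Q, rfl⟩ : ∃ p Q, P = p :: Q := by
      cases hP : P with
      | nil => rw [hP] at hPlen; simp at hPlen; omega
      | cons p Q => exact ⟨p, Q, rfl⟩
    have hLpos : 0 < L := by
      have := hb p (List.mem_cons_self); omega
    have hp0 : p = 0 := by
      obtain ⟨r, hr, hr1, _⟩ := hcov 0 hLpos
      have hr0 : r = 0 := Nat.le_zero.mp hr1
      subst hr0
      rcases List.mem_cons.mp hr with h | h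
      · omega
      · have := (List.pairwise_cons.mp hsort).1 0 h
        omega
    subst hp0
    set d := List.zipWith (fun a b => b - a) (0 :: Q) Q with hddef
    have hscan : List.scanl (· + ·) 0 d = 0 :: Q := scanl_diff Q 0 hsort
    have hdle : ∀ x ∈ d, x ≤ γ+1 :=
      diffs_le γ Q 0 L hsort hb (fun j _ hjL => hcov j hjL)
    have hsum : d.sum + (γ+1) = L := by
      have h1 : d.sum + (γ+1) ≤ L := by
        have hm : (0 : ℕ) + d.sum ∈ List.scanl (· + ·) 0 d := sum_mem_scanl d 0
        rw [hscan] at hm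
        have := hb _ hm
        omega
      have h2 : L ≤ d.sum + (γ+1) := by
        obtain ⟨r, hr, hr1, hr2⟩ := hcov (L-1) (by omega)
        rw [← hscan] at hr
        have := (scanl_le d 0 r hr).2
        omega
      omega
    have hlen : d.length = n - 1 := by
      have : d.length = Q.length := by
        rw [hddef, List.length_zipWith]
        simp only [List.length_cons]
        omega
      rw [this]
      simp only [List.length_cons] at hPlen
      omega
    refine ⟨⟨d, hlen, hdle⟩, ?_⟩
    apply Subtype.ext
    show hw γ (List.scanl (· + ·) 0 d) (d.sum + (γ+1)) = w
    rw [hscan, hsum, hwP]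
def enc (γ : ℕ) : List (List (Fin (γ+1))) → List (Fin (γ+2))
  | [] => []
  | [w] => w.map Fin.castSucc
  | w :: ws => w.map Fin.castSucc ++ Fin.last (γ+1) :: enc γ ws

def dec (γ : ℕ) : List (Fin (γ+2)) → List (List (Fin (γ+1)))
  | [] => [[]]
  | a :: s =>
    if h : (a : ℕ) < γ + 1 then
      ((⟨a, h⟩ : Fin (γ+1)) :: (dec γ s).headI) :: (dec γ s).tail
    else [] :: dec γ s

lemma dec_ne_nil (γ : ℕ) (s : List (Fin (γ+2))) : dec γ s ≠ [] := by
  cases s with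
  | nil => simp [dec]
  | cons a s => simp only [dec]; split <;> simp

lemma enc_two (γ : ℕ) (w v : List (Fin (γ+1))) (ws : List (List (Fin (γ+1)))) :
    enc γ (w :: v :: ws) = w.map Fin.castSucc ++ Fin.last (γ+1) :: enc γ (v :: ws) := by
  rfl

lemma enc_cons_head (γ : ℕ) (x : Fin (γ+1)) (w : List (Fin (γ+1)))
    (ws : List (List (Fin (γ+1)))) :
    enc γ ((x :: w) :: ws) = Fin.castSucc x :: enc γ (w :: ws) := by
  cases ws with
  | nil => rfl
  | cons v ws' => rfl

lemma dec_enc (γ : ℕ) : ∀ (ws : List (List (Fin (γ+1)))) (w : List (Fin (γ+1))),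
    dec γ (enc γ (w :: ws)) = w :: ws := by
  intro ws
  induction ws with
  | nil =>
    intro w
    induction w with
    | nil => rfl
    | cons a w ihw =>
      rw [enc_cons_head]
      show dec γ (Fin.castSucc a :: enc γ [w]) = _
      rw [dec]
      have h : ((Fin.castSucc a : Fin (γ+2)) : ℕ) < γ + 1 := a.isLt
      rw [dif_pos h, ihw]
      all_goals simp [Fin.ext_iff]
  | cons v ws' ih =>
    intro w
    induction w with
    | nil =>
      show dec γ (Fin.last (γ+1) :: enc γ (v :: ws')) = _
      rw [dec]
      have h : ¬ ((Fin.last (γ+1) : Fin (γ+2)) : ℕ) < γ + 1 := by simp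
      rw [dif_neg h, ih v]
    | cons a w ihw =>
      rw [enc_cons_head]
      show dec γ (Fin.castSucc a :: enc γ (w :: v :: ws')) = _
      rw [dec]
      have h : ((Fin.castSucc a : Fin (γ+2)) : ℕ) < γ + 1 := a.isLt
      rw [dif_pos h, ihw]
      all_goals simp [Fin.ext_iff]

lemma enc_dec (γ : ℕ) : ∀ s : List (Fin (γ+2)), enc γ (dec γ s) = s := by
  intro s
  induction s with
  | nil => rfl
  | cons a s ih =>
    obtain ⟨w, ws, hws⟩ : ∃ w ws, dec γ s = w :: ws := by
      cases h : dec γ s with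
      | nil => exact absurd h (dec_ne_nil γ s)
      | cons w ws => exact ⟨w, ws, rfl⟩
    rw [dec]
    split
    · next h =>
      rw [hws]
      simp only [List.headI, List.tail]
      rw [enc_cons_head]
      rw [← hws, ih]
      congr 1
    · next h =>
      rw [hws, enc_two, ← hws, ih]
      have : a = Fin.last (γ+1) := by
        have := a.isLt
        rw [Fin.ext_iff]
        simp only [Fin.val_last]
        omega
      rw [this]
      rfl

lemma enc_len (γ : ℕ) : ∀ (ws : List (List (Fin (γ+1)))) (w : List (Fin (γ+1))),
    (enc γ (w :: ws)).length + 1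
      = (w :: ws).length + ((w :: ws).map List.length).sum := by
  intro ws
  induction ws with
  | nil => intro w; simp [enc, Nat.add_comm]
  | cons v ws' ih =>
    intro w
    rw [enc_two]
    have := ih v
    simp only [List.length_append, List.length_cons, List.length_map,
      List.map_cons, List.sum_cons] at *
    omega

lemma part2_card (γ n : ℕ) (hn : 1 ≤ n) :
    Nat.card {l : List (List (Fin (γ + 1))) //
        0 < l.length ∧ l.length + (l.map List.length).sum = n}
      = Nat.card {s : List (Fin (γ+2)) // s.length = n - 1} := by
  have hFlen : ∀ (l : List (List (Fin (γ + 1)))),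
      0 < l.length → l.length + (l.map List.length).sum = n →
      (enc γ l).length = n - 1 := by
    intro l hpos hsum
    cases l with
    | nil => simp at hpos
    | cons w ws =>
      have := enc_len γ ws w
      omega
  apply Nat.card_eq_of_bijective
    (fun l => (⟨enc γ l.1, hFlen l.1 l.2.1 l.2.2⟩ : {s : List (Fin (γ+2)) // s.length = n - 1}))
  constructor
  · rintro ⟨l, hpos, hsum⟩ ⟨l', hpos', hsum'⟩ h
    simp only [Subtype.mk.injEq] at h
    apply Subtype.ext
    show l = l'
    cases l with
    | nil => simp at hpos
    | cons w ws =>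
      cases l' with
      | nil => simp at hpos'
      | cons w' ws' =>
        rw [← dec_enc γ ws w, h, dec_enc γ ws' w']
  · rintro ⟨s, hs⟩
    have hpos : 0 < (dec γ s).length :=
      List.length_pos_iff.mpr (dec_ne_nil γ s)
    have hsum : (dec γ s).length + ((dec γ s).map List.length).sum = n := by
      obtain ⟨w, ws, hws⟩ : ∃ w ws, dec γ s = w :: ws := by
        cases h : dec γ s with
        | nil => exact absurd h (dec_ne_nil γ s)
        | cons w ws => exact ⟨w, ws, rfl⟩
      have h1 := enc_len γ ws w
      rw [← hws, enc_dec] at h1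
      rw [hws] at h1 ⊢
      omega
    refine ⟨⟨dec γ s, hpos, hsum⟩, ?_⟩
    apply Subtype.ext
    show enc γ (dec γ s) = s
    exact enc_dec γ s
lemma card_list_len (α : Type) [Fintype α] (m : ℕ) :
    Nat.card {l : List α // l.length = m} = Fintype.card α ^ m := by
  have : {l : List α // l.length = m} = List.Vector α m := rfl
  rw [this, Nat.card_eq_fintype_card, card_vector]

lemma card_bounded (γ m : ℕ) :
    Nat.card {d : List ℕ // d.length = m ∧ ∀ x ∈ d, x ≤ γ+1} = (γ+2)^m := by
  have hbij : Function.Bijective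
      (fun (l : {l : List (Fin (γ+2)) // l.length = m}) =>
        (⟨l.1.map Fin.val, by simp [l.2], fun x hx => by
          obtain ⟨a, -, rfl⟩ := List.mem_map.mp hx
          exact Nat.lt_succ_iff.mp a.isLt⟩ :
          {d : List ℕ // d.length = m ∧ ∀ x ∈ d, x ≤ γ+1})) := by
    constructor
    · rintro ⟨l, hl⟩ ⟨l', hl'⟩ h
      simp only [Subtype.mk.injEq] at h
      exact Subtype.ext (List.map_injective_iff.mpr Fin.val_injective h)
    · rintro ⟨d, hl, hd⟩
      refine ⟨⟨List.pmap (fun x h => (⟨x, h⟩ : Fin (γ+2))) d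
        (fun x hx => Nat.lt_succ_of_le (hd x hx)),
        by simp [List.length_pmap, hl]⟩, ?_⟩
      apply Subtype.ext
      show (List.pmap _ d _).map Fin.val = d
      rw [List.map_pmap]
      simp [List.pmap_eq_map]
  rw [← Nat.card_eq_of_bijective _ hbij, card_list_len, Fintype.card_fin]
/-- **Proposition 4.2.** For any nonnegative integer `γ` and any `n ≥ 1`, the
`n`-th homogeneous component of `H(FHeap_γ)` has dimension `(γ+2)^{n-1}`:
the number of horizontally connected heaps of `n` friable pieces of width
`γ+1` is `(γ+2)^{n-1}`, and these are in bijection with the sequences of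
`k ≥ 1` words over the alphabet `{0, 1, …, γ}` having a total of `n - k`
letters, which are also counted by `(γ+2)^{n-1}`. -/
theorem FHeap_dimensions (γ n : ℕ) (hn : 1 ≤ n) :
    Nat.card {w : List ℕ // FHmem γ w n ∧ ReducedFH γ w} = (γ + 2) ^ (n - 1) ∧
    Nat.card {l : List (List (Fin (γ + 1))) //
        0 < l.length ∧ l.length + (l.map List.length).sum = n}
      = (γ + 2) ^ (n - 1) := by
  constructor
  · rw [part1_card γ n hn, card_bounded]
  · rw [part2_card γ n hn, card_list_len, Fintype.card_fin]
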